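/- For permutations σ, π ∈ S_n, the Ulam distance d(σ,π) := n − ℓ(σ,π), where ℓ is the length of the longest common subsequence, equals the minimum number of translocations needed to transform σ into π. -/

import Mathlib

namespace UlamPaper

/-- Underlying function of the translocation `φ(i,j)` (0-indexed). -/
def tf (i j k : ℕ) : ℕ :=
  if i ≤ j then (if k < i ∨ j < k then k else if k = j then i else k + 1)
  else (if k < j ∨ i < k then k else if k = j then i else k - 1)

theorem tf_lt {n i j k : ℕ} (hi : i < n) (hj : j < n) (hk : k < n) : tf i j k < n := by
  unfold tf; split_ifs <;> omega

theorem tf_tf (i j k : ℕ) : tf j i (tf i j k) = k := by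
  unfold tf; split_ifs <;> omega

/-- The translocation `φ(i,j)` as a permutation of `Fin n`: it deletes the entry in
position `i` and reinserts it at position `j`, shifting intermediate entries. -/
def transloc {n : ℕ} (i j : Fin n) : Equiv.Perm (Fin n) where
  toFun k := ⟨tf i.val j.val k.val, tf_lt i.isLt j.isLt k.isLt⟩
  invFun k := ⟨tf j.val i.val k.val, tf_lt j.isLt i.isLt k.isLt⟩
  left_inv k := Fin.ext (tf_tf i.val j.val k.val)
  right_inv k := Fin.ext (tf_tf j.val i.val k.val)

/-- `IsTransloc φ` : `φ` is a translocation. -/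
def IsTransloc {n : ℕ} (φ : Equiv.Perm (Fin n)) : Prop := ∃ i j : Fin n, φ = transloc i j

/-- Length of the longest common subsequence of two `n`-length sequences. -/
noncomputable def lcsLen {n : ℕ} {α : Type*} (u v : Fin n → α) : ℕ :=
  sSup {k | ∃ f g : Fin k → Fin n, StrictMono f ∧ StrictMono g ∧ ∀ p, u (f p) = v (g p)}

/-- The Ulam distance `d(σ,π) = n - ℓ(σ,π)`. -/
noncomputable def ulamDist {n : ℕ} (σ π : Equiv.Perm (Fin n)) : ℕ :=
  n - lcsLen (⇑σ) (⇑π)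

/-- The `r`-regular multipermutation `m_σ^r` (with values in `[1, n/r]`). -/
def mult {n : ℕ} (r : ℕ) (σ : Equiv.Perm (Fin n)) : Fin n → ℕ :=
  fun i => (σ i).val / r + 1

/-- The `r`-regular Ulam distance, expressed as `n - ℓ(m_σ^r, m_π^r)`. -/
noncomputable def multDist {n : ℕ} (r : ℕ) (σ π : Equiv.Perm (Fin n)) : ℕ :=
  n - lcsLen (mult r σ) (mult r π)

lemma tf_mono {i j x y : ℕ} (hx : x ≠ i) (hy : y ≠ i) (hxy : x < y) :
    tf j i x < tf j i y := by
  unfold tf; split_ifs <;> omega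
lemma tf_self (i j : ℕ) : tf i j j = i := by
  unfold tf; split_ifs <;> omega
lemma chain_le {n : ℕ} {α : Type*} {u v : Fin n → α} {k : ℕ}
    (h : ∃ f g : Fin k → Fin n, StrictMono f ∧ StrictMono g ∧ ∀ p, u (f p) = v (g p)) :
    k ≤ n := by
  obtain ⟨f, _, hf, _, _⟩ := h
  simpa using Fintype.card_le_of_injective f hf.injective
lemma zero_mem_lcs {n : ℕ} {α : Type*} (u v : Fin n → α) :
    0 ∈ {k | ∃ f g : Fin k → Fin n, StrictMono f ∧ StrictMono g ∧ ∀ p, u (f p) = v (g p)} :=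
  ⟨fun p => p.elim0, fun p => p.elim0, fun p => p.elim0, fun p => p.elim0, fun p => p.elim0⟩
lemma le_lcsLen {n : ℕ} {α : Type*} {u v : Fin n → α} {k : ℕ}
    (f g : Fin k → Fin n) (hf : StrictMono f) (hg : StrictMono g)
    (h : ∀ p, u (f p) = v (g p)) : k ≤ lcsLen u v :=
  le_csSup ⟨n, fun _ hk => chain_le hk⟩ ⟨f, g, hf, hg, h⟩
lemma lcsLen_le {n : ℕ} {α : Type*} (u v : Fin n → α) : lcsLen u v ≤ n :=
  csSup_le ⟨0, zero_mem_lcs u v⟩ (fun _ hk => chain_le hk)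
lemma lcsLen_spec {n : ℕ} {α : Type*} (u v : Fin n → α) :
    ∃ f g : Fin (lcsLen u v) → Fin n,
      StrictMono f ∧ StrictMono g ∧ ∀ p, u (f p) = v (g p) :=
  Nat.sSup_mem ⟨0, zero_mem_lcs u v⟩ ⟨n, fun _ hk => chain_le hk⟩

-- ### strictMono Fin n → Fin n is identity
lemma strictMono_fin_le {n : ℕ} {f : Fin n → Fin n} (hf : StrictMono f) :
    ∀ p : Fin n, (p : ℕ) ≤ (f p : ℕ) := by
  have key : ∀ (k : ℕ) (p : Fin n), (p : ℕ) = k → k ≤ (f p : ℕ) := by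
    intro k
    induction k with
    | zero => intro p _; exact Nat.zero_le _
    | succ t ih =>
      intro p hp
      have hlt : (⟨t, by omega⟩ : Fin n) < p := show (t : ℕ) < (p : ℕ) by omega
      have h1 := Fin.lt_def.mp (hf hlt)
      have h2 := ih ⟨t, by omega⟩ rfl
      omega
  intro p; exact key _ p rfl

lemma strictMono_fin_id {n : ℕ} {f : Fin n → Fin n} (hf : StrictMono f) :
    ∀ p, f p = p := by
  have hrev : StrictMono (fun p : Fin n => (f p.rev).rev) := by
    intro a b hab
    simp only [Fin.rev_lt_rev]
    exact hf (by simpa [Fin.rev_lt_rev] using hab)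
  intro p
  have h1 := strictMono_fin_le hf p
  have h2 := strictMono_fin_le hrev p.rev
  simp only [Fin.rev_rev] at h2
  have h3 : (p.rev : ℕ) ≤ ((f p).rev : ℕ) := h2
  simp only [Fin.val_rev] at h3
  have := (f p).isLt; have := p.isLt
  exact Fin.ext (by omega)

lemma eq_of_lcs_eq {n : ℕ} {σ π : Equiv.Perm (Fin n)}
    (h : n ≤ lcsLen (⇑σ) (⇑π)) : σ = π := by
  have hle := lcsLen_le (⇑σ) (⇑π)
  have heq : lcsLen (⇑σ) (⇑π) = n := le_antisymm hle h
  obtain ⟨f, g, hf, hg, hfg⟩ := lcsLen_spec (⇑σ) (⇑π)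
  have hcast : StrictMono (Fin.cast heq.symm) := fun _ _ hab => hab
  have hf' := strictMono_fin_id (hf.comp hcast)
  have hg' := strictMono_fin_id (hg.comp hcast)
  apply Equiv.ext
  intro p
  have e1 : f (Fin.cast heq.symm p) = p := hf' p
  have e2 : g (Fin.cast heq.symm p) = p := hg' p
  have := hfg (Fin.cast heq.symm p)
  rwa [e1, e2] at this

-- ### removing a translocation costs at most one
lemma chain_transloc {n : ℕ} (σ π : Equiv.Perm (Fin n)) (i j : Fin n) {m : ℕ}
    (f g : Fin m → Fin n) (hf : StrictMono f) (hg : StrictMono g)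
    (hfg : ∀ p, σ (f p) = π (g p)) :
    m ≤ lcsLen (⇑(σ * transloc i j)) (⇑π) + 1 := by
  cases m with
  | zero => omega
  | succ t =>
    have key : ∀ pstar : Fin (t + 1), (∀ p : Fin t, f (pstar.succAbove p) ≠ i) →
        t ≤ lcsLen (⇑(σ * transloc i j)) (⇑π) := by
      intro pstar hne
      refine le_lcsLen
        (fun p => ⟨tf j.val i.val (f (pstar.succAbove p)).val,
          tf_lt j.isLt i.isLt (f _).isLt⟩)
        (fun p => g (pstar.succAbove p)) ?_ ?_ ?_
      · intro a b hab
        have h1 : f (pstar.succAbove a) < f (pstar.succAbove b) :=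
          hf (Fin.strictMono_succAbove pstar hab)
        have ha := hne a; have hb := hne b
        simp only [Fin.lt_def]
        exact tf_mono (fun h => ha (Fin.ext h)) (fun h => hb (Fin.ext h)) h1
      · exact hg.comp (Fin.strictMono_succAbove pstar)
      · intro p
        have : (σ * transloc i j) ⟨tf j.val i.val (f (pstar.succAbove p)).val,
            tf_lt j.isLt i.isLt (f _).isLt⟩ = σ (f (pstar.succAbove p)) := by
          show σ (transloc i j _) = _
          congr 1
          exact Fin.ext (tf_tf j.val i.val (f (pstar.succAbove p)).val)
        rw [this]
        exact hfg _
    have : t ≤ lcsLen (⇑(σ * transloc i j)) (⇑π) := by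
      by_cases h : ∃ p, f p = i
      · exact key h.choose (fun p hp =>
          Fin.succAbove_ne _ p (hf.injective (hp.trans h.choose_spec.symm)))
      · exact key ⟨0, Nat.succ_pos t⟩ (fun p hp => h ⟨_, hp⟩)
    omega

lemma transloc_mul_transloc {n : ℕ} (i j : Fin n) :
    transloc i j * transloc j i = 1 := by
  apply Equiv.ext
  intro k
  show transloc i j (transloc j i k) = k
  exact Fin.ext (tf_tf j.val i.val k.val)

lemma lcs_mul_le {n : ℕ} (σ π : Equiv.Perm (Fin n)) {φ : Equiv.Perm (Fin n)}
    (hφ : IsTransloc φ) :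
    lcsLen (⇑(σ * φ)) (⇑π) ≤ lcsLen (⇑σ) (⇑π) + 1 := by
  obtain ⟨i, j, rfl⟩ := hφ
  obtain ⟨f, g, hf, hg, hfg⟩ := lcsLen_spec (⇑(σ * transloc i j)) (⇑π)
  have h := chain_transloc (σ * transloc i j) π j i f g hf hg hfg
  rwa [mul_assoc, transloc_mul_transloc, mul_one] at h


-- ### insertion of one element into a chain
def insF {n m : ℕ} (a : ℕ) (ham : a ≤ m) (F : Fin m → Fin n) (c : Fin n) :
    Fin (m + 1) → Fin n :=
  fun p => if h : (p : ℕ) < a then F ⟨p, by omega⟩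
    else if h2 : (p : ℕ) = a then c
    else F ⟨(p : ℕ) - 1, by have := p.isLt; omega⟩

lemma insF_strictMono {n m : ℕ} {a : ℕ} (ham : a ≤ m) {F : Fin m → Fin n} {c : Fin n}
    (hF : StrictMono F)
    (h1 : ∀ p : Fin m, (p : ℕ) < a → F p < c)
    (h2 : ∀ p : Fin m, a ≤ (p : ℕ) → c < F p) :
    StrictMono (insF a ham F c) := by
  intro x y hxy
  have hxy' : (x : ℕ) < (y : ℕ) := hxy
  unfold insF
  split_ifs with hx hy hy hy hy' hy hy'
  · exact hF (show (x : ℕ) < (y : ℕ) from hxy')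
  · exact h1 _ hx
  · exact lt_trans (h1 ⟨x, by omega⟩ hx) (h2 ⟨(y : ℕ) - 1, by have := y.isLt; omega⟩ (show a ≤ (y : ℕ) - 1 from by omega))
  · omega
  · omega
  · exact h2 ⟨(y : ℕ) - 1, by have := y.isLt; omega⟩ (show a ≤ (y : ℕ) - 1 from by omega)
  · omega
  · omega
  · exact hF (Fin.mk_lt_mk.mpr (by omega))

lemma insF_lt {n m : ℕ} {a : ℕ} (ham : a ≤ m) (F : Fin m → Fin n) (c : Fin n)
    (p : Fin (m + 1)) (hp : (p : ℕ) < a) :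
    insF a ham F c p = F ⟨p, by omega⟩ := dif_pos hp

lemma insF_eq {n m : ℕ} {a : ℕ} (ham : a ≤ m) (F : Fin m → Fin n) (c : Fin n)
    (p : Fin (m + 1)) (hp : (p : ℕ) = a) :
    insF a ham F c p = c := by
  unfold insF; rw [dif_neg (by omega), dif_pos hp]

lemma insF_gt {n m : ℕ} {a : ℕ} (ham : a ≤ m) (F : Fin m → Fin n) (c : Fin n)
    (p : Fin (m + 1)) (hp : a < (p : ℕ)) :
    insF a ham F c p = F ⟨(p : ℕ) - 1, by have := p.isLt; omega⟩ := by
  unfold insF; rw [dif_neg (by omega), dif_neg (by omega)]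

-- ### the cut point
def cutAux {n m : ℕ} (g : Fin m → Fin n) (q : ℕ) : ℕ → ℕ :=
  fun t => if h : t < m then (g ⟨t, h⟩ : ℕ) else q + 1

lemma cut_exists {n m : ℕ} (g : Fin m → Fin n) (hg : StrictMono g) (q : Fin n)
    (hq : ∀ p, g p ≠ q) :
    ∃ a : ℕ, a ≤ m ∧ (∀ p : Fin m, (p : ℕ) < a → (g p : ℕ) < (q : ℕ)) ∧
      (∀ p : Fin m, a ≤ (p : ℕ) → (q : ℕ) < (g p : ℕ)) := by
  have hex : ∃ t, (q : ℕ) < cutAux g (q : ℕ) t :=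
    ⟨m, by unfold cutAux; rw [dif_neg (lt_irrefl m)]; omega⟩
  refine ⟨Nat.find hex, Nat.find_min' hex (by unfold cutAux; rw [dif_neg (lt_irrefl m)]; omega),
    ?_, ?_⟩
  · intro p hp
    have hmin := Nat.find_min hex hp
    have heq : cutAux g (q : ℕ) (p : ℕ) = (g p : ℕ) := by
      unfold cutAux; rw [dif_pos p.isLt]
    have hne : (g p : ℕ) ≠ (q : ℕ) := fun h => hq p (Fin.ext h)
    omega
  · intro p hp
    have ha : Nat.find hex < m := lt_of_le_of_lt hp p.isLt
    have h1 := Nat.find_spec hex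
    have heq : cutAux g (q : ℕ) (Nat.find hex) = (g ⟨Nat.find hex, ha⟩ : ℕ) := by
      unfold cutAux; exact dif_pos ha
    have h2 : g ⟨Nat.find hex, ha⟩ ≤ g p :=
      hg.monotone (Fin.le_def.mpr (show Nat.find hex ≤ (p : ℕ) from hp))
    have h3 := Fin.le_def.mp h2
    omega

-- ### the augmentation step
lemma step {n : ℕ} (σ π : Equiv.Perm (Fin n)) {m : ℕ} (hmn : m < n)
    (f g : Fin m → Fin n) (hf : StrictMono f) (hg : StrictMono g)
    (hfg : ∀ p, σ (f p) = π (g p)) :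
    ∃ i j : Fin n, ∃ f' g' : Fin (m + 1) → Fin n, StrictMono f' ∧ StrictMono g' ∧
      ∀ p, (σ * transloc i j) (f' p) = π (g' p) := by
  -- a position q of π not hit by g
  obtain ⟨q, hq⟩ : ∃ q : Fin n, ∀ p, g p ≠ q := by
    by_contra h
    push_neg at h
    have := Fintype.card_le_of_surjective g (fun q => h q)
    simp at this
    omega
  set p0 : Fin n := σ.symm (π q) with hp0def
  have hσp0 : σ p0 = π q := σ.apply_symm_apply _
  have hp0f : ∀ p, f p ≠ p0 := by
    intro p hp
    have : π (g p) = π q := by rw [← hfg p, hp, hσp0]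
    exact hq p (π.injective this)
  have hp0fv : ∀ p : Fin m, (f p : ℕ) ≠ (p0 : ℕ) := fun p h => hp0f p (Fin.ext h)
  obtain ⟨a, ham, hglt, hggt⟩ := cut_exists g hg q hq
  -- choose the destination j0
  obtain ⟨j0, hj0n, hK1, hK2⟩ : ∃ j0 : ℕ, j0 < n ∧
      (∀ p : Fin m, (p : ℕ) < a → tf j0 (p0 : ℕ) (f p : ℕ) < j0) ∧
      (∀ p : Fin m, a ≤ (p : ℕ) → j0 < tf j0 (p0 : ℕ) (f p : ℕ)) := by
    rcases Nat.eq_zero_or_pos a with ha0 | hapos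
    · refine ⟨0, by omega, fun p hp => by omega, fun p _ => ?_⟩
      have h1 := hp0fv p
      have h2 := (f p).isLt
      unfold tf; split_ifs <;> omega
    · have hbm : a - 1 < m := by omega
      set F : ℕ := (f ⟨a - 1, hbm⟩ : ℕ) with hFdef
      have hFp0 : F ≠ (p0 : ℕ) := hp0fv _
      have hFn : F < n := (f _).isLt
      have hle : ∀ p : Fin m, (p : ℕ) < a → (f p : ℕ) ≤ F := by
        intro p hp
        have : p ≤ (⟨a - 1, hbm⟩ : Fin m) := Fin.le_def.mpr (show (p : ℕ) ≤ a - 1 from by omega)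
        exact Fin.le_def.mp (hf.monotone this)
      have hgt : ∀ p : Fin m, a ≤ (p : ℕ) → F < (f p : ℕ) := by
        intro p hp
        exact Fin.lt_def.mp (hf (Fin.mk_lt_mk.mpr (by omega) : (⟨a - 1, hbm⟩ : Fin m) < ⟨(p : ℕ), p.isLt⟩))
      rcases lt_or_gt_of_ne hFp0 with hc | hc
      · -- F < p0 : insert at j0 = F + 1
        refine ⟨F + 1, by have := p0.isLt; omega, ?_, ?_⟩
        · intro p hp
          have h1 := hle p hp; have h2 := hp0fv p
          unfold tf; split_ifs <;> omega
        · intro p hp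
          have h1 := hgt p hp; have h2 := hp0fv p
          unfold tf; split_ifs <;> omega
      · -- p0 < F : insert at j0 = F
        refine ⟨F, hFn, ?_, ?_⟩
        · intro p hp
          have h1 := hle p hp; have h2 := hp0fv p
          unfold tf; split_ifs <;> omega
        · intro p hp
          have h1 := hgt p hp; have h2 := hp0fv p
          unfold tf; split_ifs <;> omega
  -- assemble the new chains
  set j : Fin n := ⟨j0, hj0n⟩ with hjdef
  set Ff : Fin m → Fin n := fun p => ⟨tf j0 (p0 : ℕ) (f p : ℕ),
    tf_lt hj0n p0.isLt (f p).isLt⟩ with hFf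
  have hFfmono : StrictMono Ff := by
    intro x y hxy
    show (Ff x : ℕ) < (Ff y : ℕ)
    exact tf_mono (hp0fv x) (hp0fv y) (Fin.lt_def.mp (hf hxy))
  have hK1' : ∀ p : Fin m, (p : ℕ) < a → Ff p < j := fun p hp => Fin.lt_def.mpr (hK1 p hp)
  have hK2' : ∀ p : Fin m, a ≤ (p : ℕ) → j < Ff p := fun p hp => Fin.lt_def.mpr (hK2 p hp)
  have hq1 : ∀ p : Fin m, (p : ℕ) < a → g p < q := fun p hp => Fin.lt_def.mpr (hglt p hp)
  have hq2 : ∀ p : Fin m, a ≤ (p : ℕ) → q < g p := fun p hp => Fin.lt_def.mpr (hggt p hp)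
  refine ⟨p0, j, insF a ham Ff j, insF a ham g q,
    insF_strictMono ham hFfmono hK1' hK2',
    insF_strictMono ham hg hq1 hq2, ?_⟩
  intro p
  have key : ∀ x : Fin m, (σ * transloc p0 j) (Ff x) = σ (f x) := by
    intro x
    show σ (transloc p0 j (Ff x)) = σ (f x)
    congr 1
    exact Fin.ext (tf_tf j0 (p0 : ℕ) (f x : ℕ))
  rcases lt_trichotomy ((p : ℕ)) a with hp | hp | hp
  · rw [insF_lt ham Ff j p hp, insF_lt ham g q p hp, key]
    exact hfg _
  · rw [insF_eq ham Ff j p hp, insF_eq ham g q p hp]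
    show σ (transloc p0 j j) = π q
    have : transloc p0 j j = p0 := Fin.ext (tf_self (p0 : ℕ) j0)
    rw [this, hσp0]
  · rw [insF_gt ham Ff j p hp, insF_gt ham g q p hp, key]
    exact hfg _

lemma step_lcs {n : ℕ} (σ π : Equiv.Perm (Fin n)) (hmn : lcsLen (⇑σ) (⇑π) < n) :
    ∃ φ : Equiv.Perm (Fin n), IsTransloc φ ∧
      lcsLen (⇑σ) (⇑π) + 1 ≤ lcsLen (⇑(σ * φ)) (⇑π) := by
  obtain ⟨f, g, hf, hg, hfg⟩ := lcsLen_spec (⇑σ) (⇑π)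
  obtain ⟨i, j, f', g', hf', hg', hfg'⟩ := step σ π hmn f g hf hg hfg
  exact ⟨transloc i j, ⟨i, j, rfl⟩, le_lcsLen f' g' hf' hg' hfg'⟩

lemma exists_list {n : ℕ} (π : Equiv.Perm (Fin n)) :
    ∀ (d : ℕ) (σ : Equiv.Perm (Fin n)), n ≤ lcsLen (⇑σ) (⇑π) + d →
      ∃ L : List (Equiv.Perm (Fin n)),
        L.length ≤ d ∧ (∀ φ ∈ L, IsTransloc φ) ∧ σ * L.prod = π := by
  intro d
  induction d with
  | zero =>
    intro σ h
    exact ⟨[], by simp, by simp, by simpa using eq_of_lcs_eq (by simpa using h)⟩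
  | succ d ih =>
    intro σ h
    by_cases hn : n ≤ lcsLen (⇑σ) (⇑π)
    · exact ⟨[], by simp, by simp, by simpa using eq_of_lcs_eq hn⟩
    · obtain ⟨φ, hφ, hlcs⟩ := step_lcs σ π (by omega)
      obtain ⟨L, hlen, htl, hprod⟩ := ih (σ * φ) (by omega)
      refine ⟨φ :: L, by simpa using hlen, ?_, ?_⟩
      · intro ψ hψ
        rcases List.mem_cons.mp hψ with h' | h'
        · exact h' ▸ hφ
        · exact htl ψ h'
      · rw [List.prod_cons, ← mul_assoc]
        exact hprod

lemma lcs_prod_le {n : ℕ} (π : Equiv.Perm (Fin n)) :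
    ∀ L : List (Equiv.Perm (Fin n)), (∀ φ ∈ L, IsTransloc φ) →
      ∀ σ : Equiv.Perm (Fin n),
        lcsLen (⇑(σ * L.prod)) (⇑π) ≤ lcsLen (⇑σ) (⇑π) + L.length := by
  intro L
  induction L with
  | nil => intro _ σ; simp
  | cons φ L ih =>
    intro hL σ
    have h1 := ih (fun ψ h => hL ψ (List.mem_cons_of_mem _ h)) (σ * φ)
    have h2 := lcs_mul_le σ π (hL φ (List.mem_cons_self))
    have h3 : σ * (φ :: L).prod = (σ * φ) * L.prod := by rw [List.prod_cons, mul_assoc]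
    rw [h3, List.length_cons]
    omega


/-- The Ulam distance `d(σ,π) = n − ℓ(σ,π)` equals the minimum number of
translocations needed to transform `σ` into `π`. -/
theorem ulamDist_eq_min_translocations {n : ℕ} (σ π : Equiv.Perm (Fin n)) :
    ulamDist σ π =
      sInf {k | ∃ L : List (Equiv.Perm (Fin n)),
        L.length = k ∧ (∀ φ ∈ L, IsTransloc φ) ∧ σ * L.prod = π} := by
  have hself : n ≤ lcsLen (⇑π) (⇑π) :=
    le_lcsLen id id strictMono_id strictMono_id (fun _ => rfl)
  have hle := lcsLen_le (⇑σ) (⇑π)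
  have hlb : ∀ k ∈ {k | ∃ L : List (Equiv.Perm (Fin n)),
      L.length = k ∧ (∀ φ ∈ L, IsTransloc φ) ∧ σ * L.prod = π}, ulamDist σ π ≤ k := by
    rintro k ⟨L, rfl, hL, hprod⟩
    have h1 := lcs_prod_le π L hL σ
    rw [hprod] at h1
    unfold ulamDist
    omega
  have hmem : ulamDist σ π ∈ {k | ∃ L : List (Equiv.Perm (Fin n)),
      L.length = k ∧ (∀ φ ∈ L, IsTransloc φ) ∧ σ * L.prod = π} := by
    obtain ⟨L, hlen, hL, hprod⟩ := exists_list π (ulamDist σ π) σ (by unfold ulamDist; omega)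
    have h2 : ulamDist σ π ≤ L.length := hlb L.length ⟨L, rfl, hL, hprod⟩
    exact ⟨L, by omega, hL, hprod⟩
  exact le_antisymm (le_csInf ⟨_, hmem⟩ hlb) (Nat.sInf_le hmem)


end UlamPaper
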